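/- Let A be a real M×N matrix with columns A_1,…,A_N, let x₀ ∈ ℝ^N with support T = supp(x₀), assume A_T^*A_T is invertible, and set b = A x₀. If x₀ is the unique solution of the problem minimize ‖x‖₁ subject to A x = b, then there exists a vector w ∈ ℝ^M such that ⟨A_q, w⟩ = sign(x₀_q) for every q ∈ T and |⟨A_q, w⟩| < 1 for every q ∉ T. -/

import Mathlib

open scoped Classical
open Finset Matrix

noncomputable section

/-- The normalized Radon matrix `R^{j,k}`: rows are indexed by `j`-element subsets of
`{1,…,n}`, columns by `k`-element subsets, with entry `1/√(C(k,j))` if the row set is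
contained in the column set and `0` otherwise. -/
def radon (n j k : ℕ) :
    Matrix {σ : Finset (Fin n) // σ.card = j} {τ : Finset (Fin n) // τ.card = k} ℝ :=
  fun σ τ => if σ.1 ⊆ τ.1 then 1 / Real.sqrt (k.choose j) else 0

/-- The submatrix of `A` consisting of the columns indexed by `T`. -/
def colSub {m p R : Type*} (A : Matrix m p R) (T : Finset p) :
    Matrix m {x // x ∈ T} R :=
  fun i t => A i t.1

/-- Maximum absolute row sum of a matrix, `‖M‖_∞`. -/
def matInfNorm {m p : Type*} [Fintype p] (M : Matrix m p ℝ) : ℝ :=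
  ⨆ i, ∑ j, |M i j|

/-- Maximum absolute column sum of a matrix, `‖M‖₁`. -/
def matOneNorm {m p : Type*} [Fintype m] (M : Matrix m p ℝ) : ℝ :=
  ⨆ j, ∑ i, |M i j|

/-- `ℓ¹` norm of a vector. -/
def vecOneNorm {m : Type*} [Fintype m] (u : m → ℝ) : ℝ := ∑ i, |u i|

/-- `ℓ^∞` norm of a vector. -/
def vecInfNorm {m : Type*} (u : m → ℝ) : ℝ := ⨆ i, |u i|

/-- necessity of the dual certificate: if `A_T^*A_T` is invertible on the
support `T` of `x₀` and `x₀` is the unique `ℓ¹` minimizer subject to `Ax = Ax₀`, then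
there is a `w` with `⟨A_q, w⟩ = sign(x₀_q)` on `T` and `|⟨A_q, w⟩| < 1` off `T`. -/
lemma abs_sign_le_one' (a : ℝ) : |Real.sign a| ≤ 1 := by
  rcases lt_trichotomy a 0 with h | h | h
  · rw [Real.sign_of_neg h]; norm_num
  · simp [h]
  · rw [Real.sign_of_pos h]; norm_num

lemma abs_add_sign (a b : ℝ) (h : |b| < |a|) : |a + b| = |a| + Real.sign a * b := by
  rcases lt_trichotomy a 0 with ha | ha | ha
  · rw [Real.sign_of_neg ha, abs_of_neg ha]
    rw [abs_of_neg ha] at h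
    have : a + b < 0 := by cases abs_lt.1 h; linarith
    rw [abs_of_neg this]; ring
  · exfalso; rw [ha, abs_zero] at h; exact (abs_nonneg b).not_gt h
  · rw [Real.sign_of_pos ha, abs_of_pos ha]
    rw [abs_of_pos ha] at h
    have : 0 < a + b := by cases abs_lt.1 h; linarith
    rw [abs_of_pos this]; ring

lemma key_onesided {M N : ℕ} {A : Matrix (Fin M) (Fin N) ℝ} {x₀ : Fin N → ℝ}
    {T : Finset (Fin N)} (hT : ∀ q, q ∈ T ↔ x₀ q ≠ 0)
    (hUnique : ∀ y : Fin N → ℝ, A.mulVec y = A.mulVec x₀ → y ≠ x₀ →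
      vecOneNorm x₀ < vecOneNorm y)
    (v : Fin N → ℝ) (hv : A.mulVec v = 0) (hv0 : v ≠ 0) :
    0 < (∑ q ∈ T, Real.sign (x₀ q) * v q) + ∑ q ∈ Tᶜ, |v q| := by
  obtain ⟨q₀, hq₀⟩ := Function.ne_iff.1 hv0
  simp only [Pi.zero_apply] at hq₀
  set c : ℝ := ∑ q, |v q| with hc_def
  have hc : 0 < c :=
    Finset.sum_pos' (fun q _ => abs_nonneg _) ⟨q₀, Finset.mem_univ _, abs_pos.2 hq₀⟩
  obtain ⟨δ, hδpos, hδ⟩ : ∃ δ : ℝ, 0 < δ ∧ ∀ q ∈ T, δ ≤ |x₀ q| := by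
    by_cases hne : T.Nonempty
    · obtain ⟨b, hb, hbmin⟩ := Finset.exists_min_image T (fun q => |x₀ q|) hne
      exact ⟨|x₀ b|, abs_pos.2 ((hT b).1 hb), hbmin⟩
    · exact ⟨1, one_pos, fun q hq => absurd ⟨q, hq⟩ hne⟩
  set t : ℝ := δ / (c + 1) with ht_def
  have ht : 0 < t := div_pos hδpos (by linarith)
  have hsmall : ∀ q ∈ T, t * |v q| < |x₀ q| := by
    intro q hq
    have h1 : |v q| ≤ c := Finset.single_le_sum (fun q _ => abs_nonneg (v q)) (Finset.mem_univ q)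
    have h2 : t * c < δ := by
      rw [ht_def, div_mul_eq_mul_div, div_lt_iff₀ (by linarith)]
      nlinarith
    calc t * |v q| ≤ t * c := by nlinarith
    _ < δ := h2
    _ ≤ |x₀ q| := hδ q hq
  set y : Fin N → ℝ := fun q => x₀ q + t * v q with hy_def
  have hAy : A.mulVec y = A.mulVec x₀ := by
    have hy2 : y = x₀ + t • v := rfl
    rw [hy2, Matrix.mulVec_add, Matrix.mulVec_smul, hv, smul_zero, add_zero]
  have hyne : y ≠ x₀ := by
    intro h
    have := congrFun h q₀
    simp only [hy_def] at this
    have : t * v q₀ = 0 := by linarith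
    rcases mul_eq_zero.1 this with h' | h'
    · exact ht.ne' h'
    · exact hq₀ h'
  have hlt := hUnique y hAy hyne
  have hx0norm : vecOneNorm x₀ = ∑ q ∈ T, |x₀ q| := by
    rw [vecOneNorm, ← Finset.sum_add_sum_compl T]
    have : ∑ q ∈ Tᶜ, |x₀ q| = 0 := by
      apply Finset.sum_eq_zero
      intro q hq
      have : x₀ q = 0 := by
        by_contra h; exact (Finset.mem_compl.1 hq) ((hT q).2 h)
      simp [this]
    rw [this, add_zero]
  have hynorm : vecOneNorm y
      = (∑ q ∈ T, |x₀ q|) + t * ((∑ q ∈ T, Real.sign (x₀ q) * v q) + ∑ q ∈ Tᶜ, |v q|) := by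
    rw [vecOneNorm, ← Finset.sum_add_sum_compl T]
    have h1 : ∑ q ∈ T, |y q| = ∑ q ∈ T, (|x₀ q| + Real.sign (x₀ q) * (t * v q)) := by
      apply Finset.sum_congr rfl
      intro q hq
      apply abs_add_sign
      rw [abs_mul, abs_of_pos ht]
      exact hsmall q hq
    have h2 : ∑ q ∈ Tᶜ, |y q| = ∑ q ∈ Tᶜ, t * |v q| := by
      apply Finset.sum_congr rfl
      intro q hq
      have hx : x₀ q = 0 := by
        by_contra h; exact (Finset.mem_compl.1 hq) ((hT q).2 h)
      simp [hy_def, hx, abs_mul, abs_of_pos ht]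
    have h3 : ∑ q ∈ T, Real.sign (x₀ q) * (t * v q)
        = t * ∑ q ∈ T, Real.sign (x₀ q) * v q := by
      rw [Finset.mul_sum]; exact Finset.sum_congr rfl fun q _ => by ring
    rw [h1, h2, Finset.sum_add_distrib, h3, ← Finset.mul_sum]
    ring
  rw [hx0norm, hynorm] at hlt
  by_contra h
  push_neg at h
  nlinarith

lemma key_abs {M N : ℕ} {A : Matrix (Fin M) (Fin N) ℝ} {x₀ : Fin N → ℝ}
    {T : Finset (Fin N)} (hT : ∀ q, q ∈ T ↔ x₀ q ≠ 0)
    (hUnique : ∀ y : Fin N → ℝ, A.mulVec y = A.mulVec x₀ → y ≠ x₀ →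
      vecOneNorm x₀ < vecOneNorm y)
    (v : Fin N → ℝ) (hv : A.mulVec v = 0) (hv0 : v ≠ 0) :
    |∑ q ∈ T, Real.sign (x₀ q) * v q| < ∑ q ∈ Tᶜ, |v q| := by
  have h1 := key_onesided hT hUnique v hv hv0
  have h2 := key_onesided hT hUnique (-v) (by rw [Matrix.mulVec_neg, hv, neg_zero])
    (neg_ne_zero.2 hv0)
  simp only [Pi.neg_apply, mul_neg, Finset.sum_neg_distrib, abs_neg] at h2
  rw [abs_lt]
  constructor <;> linarith

lemma supp_T_zero {M N : ℕ} {A : Matrix (Fin M) (Fin N) ℝ} {x₀ : Fin N → ℝ}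
    {T : Finset (Fin N)} (hT : ∀ q, q ∈ T ↔ x₀ q ≠ 0)
    (hUnique : ∀ y : Fin N → ℝ, A.mulVec y = A.mulVec x₀ → y ≠ x₀ →
      vecOneNorm x₀ < vecOneNorm y)
    (v : Fin N → ℝ) (hv : A.mulVec v = 0) (hsupp : ∀ q ∈ Tᶜ, v q = 0) : v = 0 := by
  by_contra hv0
  have h := key_abs hT hUnique v hv hv0
  have : ∑ q ∈ Tᶜ, |v q| = 0 := Finset.sum_eq_zero fun q hq => by rw [hsupp q hq, abs_zero]
  rw [this] at h
  exact (abs_nonneg _).not_gt h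

lemma exists_rho {M N : ℕ} {A : Matrix (Fin M) (Fin N) ℝ} {x₀ : Fin N → ℝ}
    {T : Finset (Fin N)} (hT : ∀ q, q ∈ T ↔ x₀ q ≠ 0)
    (hUnique : ∀ y : Fin N → ℝ, A.mulVec y = A.mulVec x₀ → y ≠ x₀ →
      vecOneNorm x₀ < vecOneNorm y) :
    ∃ ρ : ℝ, 0 ≤ ρ ∧ ρ < 1 ∧ ∀ v, A.mulVec v = 0 →
      |∑ q ∈ T, Real.sign (x₀ q) * v q| ≤ ρ * ∑ q ∈ Tᶜ, |v q| := by
  set num : (Fin N → ℝ) → ℝ := fun v => |∑ q ∈ T, Real.sign (x₀ q) * v q| with hnum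
  set den : (Fin N → ℝ) → ℝ := fun v => ∑ q ∈ Tᶜ, |v q| with hden
  by_cases hker : ∀ v, A.mulVec v = 0 → v = 0
  · refine ⟨0, le_refl 0, zero_lt_one, fun v hv => ?_⟩
    rw [hker v hv]; simp
  push_neg at hker
  obtain ⟨v₀, hv₀, hv₀0⟩ := hker
  set K : Set (Fin N → ℝ) := {v | A.mulVec v = 0 ∧ ∑ q, |v q| = 1} with hK_def
  have hcont_sum : Continuous (fun v : Fin N → ℝ => ∑ q, |v q|) :=
    continuous_finset_sum _ fun i _ => (continuous_apply i).abs
  have hcont_num : Continuous num :=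
    (continuous_finset_sum _ fun i _ => (continuous_const.mul (continuous_apply i))).abs
  have hcont_den : Continuous den :=
    continuous_finset_sum _ fun i _ => (continuous_apply i).abs
  have hmem_norm : ∀ v : Fin N → ℝ, A.mulVec v = 0 → v ≠ 0 →
      (∑ q, |v q|)⁻¹ • v ∈ K := by
    intro v hv hv0
    obtain ⟨q₀, hq₀⟩ := Function.ne_iff.1 hv0
    simp only [Pi.zero_apply] at hq₀
    have hc : 0 < ∑ q, |v q| :=
      Finset.sum_pos' (fun q _ => abs_nonneg _) ⟨q₀, Finset.mem_univ _, abs_pos.2 hq₀⟩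
    constructor
    · rw [Matrix.mulVec_smul, hv, smul_zero]
    · have : ∀ q, |((∑ q, |v q|)⁻¹ • v) q| = (∑ q, |v q|)⁻¹ * |v q| := by
        intro q
        rw [Pi.smul_apply, smul_eq_mul, abs_mul, abs_of_pos (inv_pos.2 hc)]
      rw [Finset.sum_congr rfl fun q _ => this q, ← Finset.mul_sum, inv_mul_cancel₀ hc.ne']
  have hKlt : ∀ v ∈ K, num v < den v := by
    intro v hv
    have hv0 : v ≠ 0 := by
      intro h
      rw [h] at hv
      simp [hK_def] at hv
    exact key_abs hT hUnique v hv.1 hv0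
  have hKden : ∀ v ∈ K, 0 < den v := fun v hv => (abs_nonneg _).trans_lt (hKlt v hv)
  have hKcompact : IsCompact K := by
    apply (isCompact_closedBall (0 : Fin N → ℝ) 1).of_isClosed_subset
    · have h1 : IsClosed ((fun v : Fin N → ℝ => A.mulVec v) ⁻¹' {0}) := by
        apply IsClosed.preimage _ isClosed_singleton
        have : (fun v : Fin N → ℝ => A.mulVec v) = A.mulVecLin := by
          funext v; rw [Matrix.mulVecLin_apply]
        rw [this]
        exact A.mulVecLin.continuous_of_finiteDimensional
      have h2 : IsClosed ((fun v : Fin N → ℝ => ∑ q, |v q|) ⁻¹' {1}) :=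
        IsClosed.preimage hcont_sum isClosed_singleton
      exact h1.inter h2
    · intro v hv
      rw [Metric.mem_closedBall, dist_zero_right]
      rw [pi_norm_le_iff_of_nonneg zero_le_one]
      intro q
      rw [Real.norm_eq_abs, ← hv.2]
      exact Finset.single_le_sum (fun q _ => abs_nonneg (v q)) (Finset.mem_univ q)
  have hKne : K.Nonempty := ⟨_, hmem_norm v₀ hv₀ hv₀0⟩
  have hφcont : ContinuousOn (fun v => num v / den v) K :=
    ContinuousOn.div hcont_num.continuousOn hcont_den.continuousOn
      fun v hv => (hKden v hv).ne'
  obtain ⟨vm, hvmK, hvmax⟩ := hKcompact.exists_isMaxOn hKne hφcont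
  refine ⟨max (num vm / den vm) 0, le_max_right _ _, ?_, ?_⟩
  · exact max_lt ((div_lt_one (hKden vm hvmK)).2 (hKlt vm hvmK)) zero_lt_one
  · intro v hv
    by_cases hv0 : v = 0
    · subst hv0; simp [hnum, hden]
    set c : ℝ := ∑ q, |v q| with hc_def
    obtain ⟨q₀, hq₀⟩ := Function.ne_iff.1 hv0
    simp only [Pi.zero_apply] at hq₀
    have hc : 0 < c :=
      Finset.sum_pos' (fun q _ => abs_nonneg _) ⟨q₀, Finset.mem_univ _, abs_pos.2 hq₀⟩
    have hvhat := hmem_norm v hv hv0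
    set vh : Fin N → ℝ := c⁻¹ • v with hvh_def
    have hnum_vh : num vh = c⁻¹ * num v := by
      have hs : (∑ q ∈ T, Real.sign (x₀ q) * (c⁻¹ * v q))
          = c⁻¹ * ∑ q ∈ T, Real.sign (x₀ q) * v q := by
        rw [Finset.mul_sum]; exact Finset.sum_congr rfl fun q _ => by ring
      simp only [hnum, hvh_def, Pi.smul_apply, smul_eq_mul]
      rw [hs, abs_mul, abs_of_pos (inv_pos.2 hc)]
    have hden_vh : den vh = c⁻¹ * den v := by
      simp only [hden, hvh_def, Pi.smul_apply, smul_eq_mul, Finset.mul_sum]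
      exact Finset.sum_congr rfl fun q _ => by
        rw [abs_mul, abs_of_pos (inv_pos.2 hc)]
    have h1 : num vh / den vh ≤ num vm / den vm := hvmax hvhat
    have h2 : num vh ≤ (num vm / den vm) * den vh :=
      (div_le_iff₀ (hKden vh hvhat)).1 h1
    have h3 : num vh ≤ max (num vm / den vm) 0 * den vh := by
      have := mul_le_mul_of_nonneg_right (le_max_left (num vm / den vm) 0)
        (hKden vh hvhat).le
      linarith
    rw [hnum_vh, hden_vh] at h3
    have := mul_le_mul_of_nonneg_left h3 hc.le
    calc num v = c * (c⁻¹ * num v) := by field_simp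
    _ ≤ c * (max (num vm / den vm) 0 * (c⁻¹ * den v)) := this
    _ = max (num vm / den vm) 0 * den v := by
      have hcc : c * c⁻¹ = 1 := mul_inv_cancel₀ hc.ne'
      linear_combination (max (num vm / den vm) 0 * den v) * hcc

theorem stmt3 (M N : ℕ) (A : Matrix (Fin M) (Fin N) ℝ) (x₀ : Fin N → ℝ)
    (T : Finset (Fin N)) (hT : T = Finset.univ.filter (fun q => x₀ q ≠ 0))
    (hInv : IsUnit ((colSub A T)ᵀ * colSub A T))
    (hUnique : ∀ y : Fin N → ℝ, A.mulVec y = A.mulVec x₀ → y ≠ x₀ →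
      vecOneNorm x₀ < vecOneNorm y) :
    ∃ w : Fin M → ℝ,
      (∀ q ∈ T, ∑ i, A i q * w i = Real.sign (x₀ q)) ∧
      (∀ q ∉ T, |∑ i, A i q * w i| < 1) := by
  have hTiff : ∀ q, q ∈ T ↔ x₀ q ≠ 0 := by intro q; rw [hT]; simp
  have exists_rho' := exists_rho hTiff hUnique
  have supp_T_zero' : ∀ v : Fin N → ℝ, A.mulVec v = 0 → (∀ q ∈ Tᶜ, v q = 0) → v = 0 :=
    fun v hv hs => supp_T_zero hTiff hUnique v hv hs
  obtain ⟨ρ, hρ0, hρ1, hρ⟩ := exists_rho'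
  set p : (Fin N → ℝ) → ℝ := fun x => ρ * ∑ q ∈ Tᶜ, |x q| + ∑ q ∈ T, |x q| with hp_def
  -- submodules
  set D := LinearMap.ker A.mulVecLin with hD_def
  set VT : Submodule ℝ (Fin N → ℝ) :=
    Submodule.pi (↑Tᶜ : Set (Fin N)) (fun _ => (⊥ : Submodule ℝ ℝ)) with hVT_def
  have hVT_mem : ∀ u : Fin N → ℝ, u ∈ VT ↔ ∀ q ∈ Tᶜ, u q = 0 := by
    intro u
    simp [hVT_def, Submodule.mem_pi]
  have hD_mem : ∀ v : Fin N → ℝ, v ∈ D ↔ A.mulVec v = 0 := by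
    intro v
    rw [hD_def, LinearMap.mem_ker, Matrix.mulVecLin_apply]
  -- the functional ℓ
  set ℓ : (Fin N → ℝ) →ₗ[ℝ] ℝ :=
    { toFun := fun x => ∑ q ∈ T, Real.sign (x₀ q) * x q
      map_add' := by intro x y; simp [mul_add, Finset.sum_add_distrib]
      map_smul' := by
        intro c x
        simp only [Pi.smul_apply, smul_eq_mul, RingHom.id_apply, Finset.mul_sum]
        exact Finset.sum_congr rfl fun q _ => by ring } with hℓ_def
  have hℓ_apply : ∀ x, ℓ x = ∑ q ∈ T, Real.sign (x₀ q) * x q := fun x => rfl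
  set φmap : ↥D × ↥VT →ₗ[ℝ] (Fin N → ℝ) :=
    D.subtype.comp (LinearMap.fst ℝ ↥D ↥VT) + VT.subtype.comp (LinearMap.snd ℝ ↥D ↥VT)
    with hφ_def
  have hφ_apply : ∀ z : ↥D × ↥VT, φmap z = z.1.1 + z.2.1 := fun z => rfl
  set F₀ : ↥D × ↥VT →ₗ[ℝ] ℝ :=
    ℓ.comp (VT.subtype.comp (LinearMap.snd ℝ ↥D ↥VT)) with hF₀_def
  have hF₀_apply : ∀ z : ↥D × ↥VT, F₀ z = ∑ q ∈ T, Real.sign (x₀ q) * z.2.1 q :=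
    fun z => rfl
  have hkerφ : LinearMap.ker φmap ≤ LinearMap.ker F₀ := by
    intro z hz
    rw [LinearMap.mem_ker] at hz ⊢
    have hz' : z.1.1 + z.2.1 = 0 := by rw [← hφ_apply]; exact hz
    have hu0 : z.2.1 = 0 := by
      apply supp_T_zero'
      · have hAv : A.mulVec z.1.1 = 0 := (hD_mem _).1 z.1.2
        have : z.2.1 = -z.1.1 := by linear_combination (norm := module) hz'
        rw [this, Matrix.mulVec_neg, hAv, neg_zero]
      · exact (hVT_mem _).1 z.2.2
    rw [hF₀_apply, hu0]
    simp
  set Fr : ↥(LinearMap.range φmap) →ₗ[ℝ] ℝ :=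
    ((LinearMap.ker φmap).liftQ F₀ hkerφ).comp
      (φmap.quotKerEquivRange.symm : _ →ₗ[ℝ] _) with hFr_def
  have hFr : ∀ z : ↥D × ↥VT, ∀ hm : φmap z ∈ LinearMap.range φmap,
      Fr ⟨φmap z, hm⟩ = F₀ z := by
    intro z hm
    have h2 : φmap.quotKerEquivRange.symm ⟨φmap z, hm⟩
        = Submodule.Quotient.mk z := by
      apply φmap.quotKerEquivRange.injective
      rw [LinearEquiv.apply_symm_apply]
      exact (Subtype.ext (LinearMap.quotKerEquivRange_apply_mk φmap z)).symm
    rw [hFr_def, LinearMap.comp_apply]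
    erw [h2]
    rw [Submodule.liftQ_apply]
  set fP : (Fin N → ℝ) →ₗ.[ℝ] ℝ := ⟨LinearMap.range φmap, Fr⟩ with hfP_def
  -- sublinearity of p
  have p_hom : ∀ c : ℝ, 0 < c → ∀ x, p (c • x) = c * p x := by
    intro c hc x
    simp only [hp_def, Pi.smul_apply, smul_eq_mul, abs_mul, abs_of_pos hc]
    rw [← Finset.mul_sum, ← Finset.mul_sum]
    ring
  have p_add : ∀ x y, p (x + y) ≤ p x + p y := by
    intro x y
    have h1 : ∑ q ∈ Tᶜ, |(x + y) q| ≤ ∑ q ∈ Tᶜ, |x q| + ∑ q ∈ Tᶜ, |y q| := by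
      rw [← Finset.sum_add_distrib]
      exact Finset.sum_le_sum fun q _ => abs_add_le _ _
    have h2 : ∑ q ∈ T, |(x + y) q| ≤ ∑ q ∈ T, |x q| + ∑ q ∈ T, |y q| := by
      rw [← Finset.sum_add_distrib]
      exact Finset.sum_le_sum fun q _ => abs_add_le _ _
    have h3 := mul_le_mul_of_nonneg_left h1 hρ0
    simp only [hp_def]
    rw [mul_add] at h3
    linarith
  -- the bound on the domain
  have hfb : ∀ x : fP.domain, fP x ≤ p x := by
    rintro ⟨y, hy⟩
    obtain ⟨z, hz⟩ := hy
    have hmem : φmap z ∈ LinearMap.range φmap := LinearMap.mem_range_self _ z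
    have : (⟨y, ⟨z, hz⟩⟩ : ↥(LinearMap.range φmap)) = ⟨φmap z, hmem⟩ :=
      Subtype.ext hz.symm
    have happ : fP ⟨y, ⟨z, hz⟩⟩ = F₀ z := by
      show Fr ⟨y, ⟨z, hz⟩⟩ = F₀ z
      rw [this, hFr z hmem]
    rw [happ]
    set v : Fin N → ℝ := z.1.1 with hv_def
    set u : Fin N → ℝ := z.2.1 with hu_def
    have hu : ∀ q ∈ Tᶜ, u q = 0 := (hVT_mem _).1 z.2.2
    have hAv : A.mulVec v = 0 := (hD_mem _).1 z.1.2
    have hyq : ∀ q, y q = v q + u q := by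
      intro q
      rw [← hz, hφ_apply]
      rfl
    rw [hF₀_apply]
    have step1 : ∑ q ∈ T, Real.sign (x₀ q) * u q
        = ∑ q ∈ T, Real.sign (x₀ q) * y q - ∑ q ∈ T, Real.sign (x₀ q) * v q := by
      rw [← Finset.sum_sub_distrib]
      refine Finset.sum_congr rfl fun q _ => ?_
      have := hyq q
      have hq' : u q = y q - v q := by linarith
      rw [hq']; ring
    have step2 : ∑ q ∈ T, Real.sign (x₀ q) * y q ≤ ∑ q ∈ T, |y q| := by
      refine Finset.sum_le_sum fun q _ => ?_
      calc Real.sign (x₀ q) * y q ≤ |Real.sign (x₀ q) * y q| := le_abs_self _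
      _ = |Real.sign (x₀ q)| * |y q| := abs_mul _ _
      _ ≤ 1 * |y q| := mul_le_mul_of_nonneg_right (abs_sign_le_one' _) (abs_nonneg _)
      _ = |y q| := one_mul _
    have step3 : -(∑ q ∈ T, Real.sign (x₀ q) * v q) ≤ ρ * ∑ q ∈ Tᶜ, |v q| :=
      (neg_le_abs _).trans (by simpa [abs_neg] using hρ v hAv)
    have step4 : ∑ q ∈ Tᶜ, |v q| = ∑ q ∈ Tᶜ, |y q| := by
      refine Finset.sum_congr rfl fun q hq => ?_
      rw [hyq q, hu q hq, add_zero]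
    simp only [hp_def]
    rw [step1]
    rw [step4] at step3
    linarith
  obtain ⟨g, hg_eq, hg_le⟩ := exists_extension_of_le_sublinear fP p p_hom p_add hfb
  -- g vanishes on the kernel
  have hgker : ∀ v : Fin N → ℝ, A.mulVec v = 0 → g v = 0 := by
    intro v hv
    set z : ↥D × ↥VT := (⟨v, (hD_mem v).2 hv⟩, 0) with hz_def
    have hφz : φmap z = v := by rw [hφ_apply]; simp [hz_def]
    have hmem : v ∈ LinearMap.range φmap := ⟨z, hφz⟩
    have := hg_eq ⟨v, hmem⟩
    rw [this]
    show Fr ⟨v, hmem⟩ = 0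
    have : (⟨v, hmem⟩ : ↥(LinearMap.range φmap)) = ⟨φmap z, LinearMap.mem_range_self _ z⟩ :=
      Subtype.ext hφz.symm
    rw [this, hFr, hF₀_apply]
    simp [hz_def]
  -- g on the support
  have hgT : ∀ q ∈ T, g (Pi.single q 1) = Real.sign (x₀ q) := by
    intro q hq
    have hmemVT : (Pi.single q 1 : Fin N → ℝ) ∈ VT := by
      rw [hVT_mem]
      intro q' hq'
      have : q' ≠ q := by rintro rfl; exact (Finset.mem_compl.1 hq') hq
      exact Pi.single_eq_of_ne this 1
    set z : ↥D × ↥VT := (0, ⟨Pi.single q 1, hmemVT⟩) with hz_def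
    have hφz : φmap z = Pi.single q 1 := by rw [hφ_apply]; simp [hz_def]
    have hmem : (Pi.single q 1 : Fin N → ℝ) ∈ LinearMap.range φmap := ⟨z, hφz⟩
    rw [hg_eq ⟨Pi.single q 1, hmem⟩]
    show Fr ⟨Pi.single q 1, hmem⟩ = Real.sign (x₀ q)
    have heq : (⟨Pi.single q 1, hmem⟩ : ↥(LinearMap.range φmap))
        = ⟨φmap z, LinearMap.mem_range_self _ z⟩ := Subtype.ext hφz.symm
    rw [heq, hFr, hF₀_apply]
    rw [Finset.sum_eq_single_of_mem q hq]
    · simp [hz_def]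
    · intro q' _ hne
      simp [hz_def, Pi.single_eq_of_ne hne]
  -- g off the support
  have hgc : ∀ q ∉ T, |g (Pi.single q 1)| ≤ ρ := by
    intro q hq
    have hpe : p (Pi.single q 1) = ρ := by
      simp only [hp_def]
      have h1 : ∑ q' ∈ Tᶜ, |(Pi.single q 1 : Fin N → ℝ) q'| = 1 := by
        rw [Finset.sum_eq_single_of_mem q (Finset.mem_compl.2 hq)]
        · simp
        · intro q' _ hne
          rw [Pi.single_eq_of_ne hne, abs_zero]
      have h2 : ∑ q' ∈ T, |(Pi.single q 1 : Fin N → ℝ) q'| = 0 := by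
        refine Finset.sum_eq_zero fun q' hq' => ?_
        have : q' ≠ q := by rintro rfl; exact hq hq'
        rw [Pi.single_eq_of_ne this, abs_zero]
      rw [h1, h2]; ring
    have hpe' : p (-(Pi.single q 1)) = ρ := by
      simp only [hp_def] at hpe ⊢
      simpa [abs_neg] using hpe
    have h1 : g (Pi.single q 1) ≤ ρ := by rw [← hpe]; exact hg_le _
    have h2 : -g (Pi.single q 1) ≤ ρ := by
      rw [← hpe', ← map_neg]
      exact hg_le _
    exact abs_le.2 ⟨by linarith, h1⟩
  -- factor g through A
  have hkerg : LinearMap.ker A.mulVecLin ≤ LinearMap.ker g := by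
    intro v hv
    rw [LinearMap.mem_ker]
    exact hgker v ((hD_mem v).1 hv)
  set h : (Fin M → ℝ) →ₗ[ℝ] ℝ :=
    (LinearMap.exists_extend
      (((LinearMap.ker A.mulVecLin).liftQ g hkerg).comp
        A.mulVecLin.quotKerEquivRange.symm.toLinearMap)).choose with hh_def
  have hh := (LinearMap.exists_extend
      (((LinearMap.ker A.mulVecLin).liftQ g hkerg).comp
        A.mulVecLin.quotKerEquivRange.symm.toLinearMap)).choose_spec
  have hhx : ∀ x : Fin N → ℝ, h (A.mulVec x) = g x := by
    intro x
    have hmem : A.mulVec x ∈ LinearMap.range A.mulVecLin := by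
      rw [← Matrix.mulVecLin_apply]; exact LinearMap.mem_range_self _ x
    have h0 : h (A.mulVec x)
        = h ((LinearMap.range A.mulVecLin).subtype ⟨A.mulVec x, hmem⟩) := rfl
    rw [h0, ← hh_def] at *
    have h1 := congrFun (congrArg (fun f => f.toFun) hh) ⟨A.mulVec x, hmem⟩
    rw [show h ((LinearMap.range A.mulVecLin).subtype ⟨A.mulVec x, hmem⟩)
      = (((LinearMap.ker A.mulVecLin).liftQ g hkerg).comp
        A.mulVecLin.quotKerEquivRange.symm.toLinearMap) ⟨A.mulVec x, hmem⟩ from h1]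
    have h2 : A.mulVecLin.quotKerEquivRange.symm ⟨A.mulVec x, hmem⟩
        = Submodule.Quotient.mk x := by
      apply A.mulVecLin.quotKerEquivRange.injective
      rw [LinearEquiv.apply_symm_apply]
      refine (Subtype.ext ?_).symm
      rw [LinearMap.quotKerEquivRange_apply_mk, Matrix.mulVecLin_apply]
    rw [LinearMap.comp_apply]
    erw [h2]
    rw [Submodule.liftQ_apply]
  -- define w
  set w : Fin M → ℝ := fun i => h (Pi.single i 1) with hw_def
  have hlin : ∀ v : Fin M → ℝ, h v = ∑ i, v i * w i := by
    intro v
    conv_lhs => rw [← Finset.univ_sum_single v]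
    rw [map_sum]
    refine Finset.sum_congr rfl fun i _ => ?_
    have hsingle : Pi.single i (v i) = v i • (Pi.single i 1 : Fin M → ℝ) := by
      funext j
      by_cases hj : j = i
      · subst hj; simp
      · simp [Pi.single_eq_of_ne hj]
    rw [hsingle, _root_.map_smul, smul_eq_mul, hw_def]
  have hsum : ∀ q : Fin N, ∑ i, A i q * w i = g (Pi.single q 1) := by
    intro q
    have h1 : A.mulVec (Pi.single q 1) = fun i => A i q := by
      rw [Matrix.mulVec_single]
      funext i
      simp
    rw [← hhx (Pi.single q 1), h1, hlin]
  refine ⟨w, fun q hq => ?_, fun q hq => ?_⟩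
  · rw [hsum q]; exact hgT q hq
  · rw [hsum q]; exact (hgc q hq).trans_lt hρ1
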